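/- The map i₁ : UMat → 𝔸 sending an adjacency-matrix morphism (B, [A]) : m → n (B an m×n matrix, A an m×m matrix up to the symmetric-difference relation) to the open-graph tuple (0, [A], B, !, ¡, [()]) preserves composition: under the UMat composition (B',[A']) ∘ (B,[A]) = (B B', [A + B A' Bᵀ]), one has i₁((B',[A']) ∘ (B,[A])) = i₁(B',[A']) ∘ i₁(B,[A]) where the right-hand side uses the open-graph composition formula (all internal-vertex blocks being empty). -/

import Mathlib

open Matrix

/-- Open-graph tuples over F₂ = ZMod 2. -/
structure OGTuple (μ ν κ : Type) where
  A : Matrix μ μ (ZMod 2)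
  B : Matrix μ ν (ZMod 2)
  C : Matrix μ κ (ZMod 2)
  D : Matrix κ ν (ZMod 2)
  E : Matrix κ κ (ZMod 2)

/-- Composition of open-graph tuples (Γ first, then Γ'). -/
def ogComp {μ ν ρ κ κ' : Type} [Fintype ν] (Γ : OGTuple μ ν κ) (Γ' : OGTuple ν ρ κ') :
    OGTuple μ ρ (κ ⊕ κ') where
  A := Γ.A + Γ.B * Γ'.A * Γ.Bᵀ
  B := Γ.B * Γ'.B
  C := Matrix.fromCols (Γ.C + Γ.B * (Γ'.A + Γ'.Aᵀ) * Γ.Dᵀ) (Γ.B * Γ'.C)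
  D := Matrix.fromRows (Γ.D * Γ'.B) Γ'.D
  E := Matrix.fromBlocks (Γ.E + Γ.D * Γ'.A * Γ.Dᵀ) (Γ.D * Γ'.C) 0 Γ'.E

/-- The map `i₁ : UMat → 𝔸`, sending an adjacency-matrix morphism `(B, A)` (with `B : m×n`
and `A : m×m`) to the open-graph tuple `(0, A, B, !, ¡, ())` with no internal vertices. -/
def i1 {m n : ℕ} (B : Matrix (Fin m) (Fin n) (ZMod 2)) (A : Matrix (Fin m) (Fin m) (ZMod 2)) :
    OGTuple (Fin m) (Fin n) (Fin 0) where
  A := A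
  B := B
  C := 0
  D := 0
  E := 0

/-- `i₁` preserves composition: `i₁((B',A') ∘ (B,A)) = i₁(B',A') ∘ i₁(B,A)`,
where the UMat composition is `(B',A') ∘ (B,A) = (B·B', A + B·A'·Bᵀ)` and the right-hand
side uses the open-graph composition formula (all internal-vertex blocks being empty). -/
theorem i1_preserves_composition {m n p : ℕ}
    (B : Matrix (Fin m) (Fin n) (ZMod 2)) (A : Matrix (Fin m) (Fin m) (ZMod 2))
    (B' : Matrix (Fin n) (Fin p) (ZMod 2)) (A' : Matrix (Fin n) (Fin n) (ZMod 2)) :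
    letI l := ogComp (i1 B A) (i1 B' A')
    letI e := Equiv.sumEmpty (Fin 0) (Fin 0)  -- Fin 0 ⊕ Fin 0 ≃ Fin 0
    l.A = A + B * A' * Bᵀ ∧ l.B = B * B' ∧
    l.C = ((0 : Matrix (Fin m) (Fin 0) (ZMod 2)).submatrix id e) ∧
    l.D = ((0 : Matrix (Fin 0) (Fin p) (ZMod 2)).submatrix e id) ∧
    l.E = ((0 : Matrix (Fin 0) (Fin 0) (ZMod 2)).submatrix e e) := by
  refine ⟨rfl, rfl, ?_, ?_, ?_⟩
  · ext i j; rcases j with j | j <;> exact j.elim0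
  · ext i j; rcases i with i | i <;> exact i.elim0
  · ext i j; rcases i with i | i <;> exact i.elim0
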